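/- Let d > 0 be an integer that is not a perfect square and let (U,V) be the minimal positive solution of the Pell equation x² − dy² = 4. Then every integer solution (u,v) of u² − dv² = 4 satisfies (u + v·√d)/2 = ε·((U + V·√d)/2)^k for some k ∈ ℤ and some ε ∈ {1, −1}. -/

import Mathlib

-- parity lemma: 2 ∣ u - d*v for any solution
lemma pell4_parity (d u v : ℤ) (h : u ^ 2 - d * v ^ 2 = 4) : 2 ∣ u - d * v := by
  obtain ⟨a, ha⟩ : Even ((u - 1) * ((u - 1) + 1)) := Int.even_mul_succ_self (u - 1)
  obtain ⟨b, hb⟩ : Even ((v - 1) * ((v - 1) + 1)) := Int.even_mul_succ_self (v - 1)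
  exact ⟨2 - a + d * b, by linear_combination h - ha + d * hb⟩

-- descent lemma
set_option maxHeartbeats 1000000 in
lemma pell4_descent (d U V : ℤ) (hd : 0 < d)
    (hU : 0 < U) (hV : 0 < V) (hUV : U ^ 2 - d * V ^ 2 = 4)
    (hmin : ∀ x y : ℤ, 0 < x → 0 < y → x ^ 2 - d * y ^ 2 = 4 → U ≤ x) :
    ∀ n : ℕ, ∀ u v : ℤ, v.toNat = n → u ^ 2 - d * v ^ 2 = 4 →
      1 ≤ ((u : ℝ) + (v : ℝ) * Real.sqrt (d : ℝ)) / 2 →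
      ∃ k : ℕ, ((u : ℝ) + (v : ℝ) * Real.sqrt (d : ℝ)) / 2 =
        (((U : ℝ) + (V : ℝ) * Real.sqrt (d : ℝ)) / 2) ^ k := by
  intro n
  induction n using Nat.strong_induction_on with
  | _ n ih =>
    intro u v hn hu hβ1
    set s : ℝ := Real.sqrt (d : ℝ) with hs
    have hd0 : (0:ℝ) ≤ (d:ℝ) := by positivity
    have hs2 : s * s = (d : ℝ) := Real.mul_self_sqrt hd0
    have hd1 : (1:ℝ) ≤ (d:ℝ) := by exact_mod_cast hd
    have hs0 : (0:ℝ) ≤ s := Real.sqrt_nonneg _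
    have hs1 : (1:ℝ) ≤ s := by nlinarith
    set β : ℝ := ((u : ℝ) + (v : ℝ) * s) / 2 with hβdef
    have hu' : (u:ℝ) ^ 2 - (d:ℝ) * (v:ℝ) ^ 2 = 4 := by exact_mod_cast hu
    have hUV' : (U:ℝ) ^ 2 - (d:ℝ) * (V:ℝ) ^ 2 = 4 := by exact_mod_cast hUV
    have hββ : β * (((u:ℝ) - (v:ℝ) * s) / 2) = 1 := by
      rw [hβdef]; linear_combination hu' / 4 - ((v:ℝ)^2/4) * hs2
    have hβ0 : (0:ℝ) < β := lt_of_lt_of_le one_pos hβ1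
    have hβconj : ((u:ℝ) - (v:ℝ) * s) / 2 = 1 / β :=
      eq_one_div_of_mul_eq_one_left (by linarith [hββ])
    have hvs : (v:ℝ) * s = β - 1 / β := by
      rw [← hβconj, hβdef]; ring
    have hinvβ : 1 / β ≤ 1 := by
      rw [div_le_one hβ0]; linarith
    have hv0 : 0 ≤ v := by
      have : (0:ℝ) ≤ (v:ℝ) * s := by rw [hvs]; linarith
      have hvr : (0:ℝ) ≤ (v:ℝ) := by nlinarith
      exact_mod_cast hvr
    rcases eq_or_lt_of_le hv0 with hv0' | hvpos
    · -- v = 0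
      have hv : v = 0 := hv0'.symm
      subst hv
      have h4 : u ^ 2 = 4 := by linarith [hu]
      have : (u - 2) * (u + 2) = 0 := by linear_combination h4
      rcases mul_eq_zero.mp this with h | h
      · have : u = 2 := by omega
        subst this
        exact ⟨0, by norm_num [hβdef]⟩
      · have : u = -2 := by omega
        subst this
        exfalso
        rw [hβdef] at hβ1
        push_cast at hβ1
        linarith
    · -- v > 0
      have hupos : 0 < u := by
        have : (0:ℝ) < (u:ℝ) := by
          have : (u:ℝ) = β + 1 / β := by rw [hβdef, ← hβconj]; ring
          rw [this]; positivity
        exact_mod_cast this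
      have hUu : U ≤ u := hmin u v hupos hvpos hu
      have hVv : V ≤ v := by
        have hU2 : U ^ 2 ≤ u ^ 2 := by nlinarith
        have hdV : d * V ^ 2 ≤ d * v ^ 2 := by linarith
        have hV2 : V ^ 2 ≤ v ^ 2 := le_of_mul_le_mul_left hdV hd
        nlinarith [hV, hvpos]
      -- α and key bounds
      set α : ℝ := ((U : ℝ) + (V : ℝ) * s) / 2 with hαdef
      have hV2' : (1:ℤ) ≤ V ^ 2 := by nlinarith [hV]
      have hdV1 : (1:ℤ) ≤ d * V ^ 2 := by
        have hd1' : (1:ℤ) ≤ d := by omega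
        have := mul_le_mul hd1' hV2' (by norm_num) (by linarith)
        simpa using this
      have hU5 : (5:ℤ) ≤ U ^ 2 := by linarith
      have hU3 : (3:ℤ) ≤ U := by nlinarith [hU, hU5]
      have hα2 : (2:ℝ) ≤ α := by
        rw [hαdef]
        have h1 : (3:ℝ) ≤ (U:ℝ) := by exact_mod_cast hU3
        have h2 : (1:ℝ) ≤ (V:ℝ) := by exact_mod_cast hV
        nlinarith
      have hα1 : (1:ℝ) < α := by linarith
      have hα0 : (0:ℝ) < α := by linarith
      have hβα : α ≤ β := by
        rw [hαdef, hβdef]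
        have h1 : (U:ℝ) ≤ (u:ℝ) := by exact_mod_cast hUu
        have h2 : (V:ℝ) ≤ (v:ℝ) := by exact_mod_cast hVv
        nlinarith
      -- construct the smaller solution
      obtain ⟨p, hp⟩ := pell4_parity d u v hu
      obtain ⟨q, hq⟩ := pell4_parity d U V hUV
      obtain ⟨r, hr⟩ : Even ((d - 1) * ((d - 1) + 1)) := Int.even_mul_succ_self (d - 1)
      obtain ⟨x, hx⟩ : (2:ℤ) ∣ u * U - d * v * V :=
        ⟨p * U + d * v * q + v * V * r, by linear_combination U * hp + (d*v) * hq + (v*V) * hr⟩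
      obtain ⟨y, hy⟩ : (2:ℤ) ∣ v * U - u * V :=
        ⟨v * q - V * p, by linear_combination v * hq - V * hp⟩
      have hxy : x ^ 2 - d * y ^ 2 = 4 := by
        have h16 : (u * U - d * v * V) ^ 2 - d * (v * U - u * V) ^ 2 = 16 := by
          linear_combination (U ^ 2 - d * V ^ 2) * hu + 4 * hUV
        have h4 : 4 * x ^ 2 - 4 * (d * y ^ 2) = 16 := by
          linear_combination h16 - (u * U - d * v * V + 2 * x) * hx + d * (v * U - u * V + 2 * y) * hy
        linarith
      set γ : ℝ := ((x : ℝ) + (y : ℝ) * s) / 2 with hγdef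
      have hx' : (u:ℝ) * U - (d:ℝ) * v * V = 2 * (x:ℝ) := by exact_mod_cast hx
      have hy' : (v:ℝ) * U - (u:ℝ) * V = 2 * (y:ℝ) := by exact_mod_cast hy
      have hβαγ : β = α * γ := by
        rw [hβdef, hαdef, hγdef]
        linear_combination (((U:ℝ) + (V:ℝ) * s) / 8) * hx'
          + (s * ((U:ℝ) + (V:ℝ) * s) / 8) * hy'
          - ((V:ℝ) * ((v:ℝ) * (U:ℝ) - (u:ℝ) * (V:ℝ)) / 8) * hs2
          - (((u:ℝ) + (v:ℝ) * s) / 8) * hUV'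
      have hγ1 : 1 ≤ γ := by
        have : γ = β / α := by field_simp [hβαγ]; linear_combination -hβαγ
        rw [this, le_div_iff₀ hα0]; linarith
      have hγ0 : (0:ℝ) < γ := lt_of_lt_of_le one_pos hγ1
      have hxy' : (x:ℝ) ^ 2 - (d:ℝ) * (y:ℝ) ^ 2 = 4 := by exact_mod_cast hxy
      have hγγ : γ * (((x:ℝ) - (y:ℝ) * s) / 2) = 1 := by
        rw [hγdef]; linear_combination hxy' / 4 - ((y:ℝ)^2/4) * hs2
      have hγconj : ((x:ℝ) - (y:ℝ) * s) / 2 = 1 / γ :=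
        eq_one_div_of_mul_eq_one_left (by linarith [hγγ])
      have hys : (y:ℝ) * s = γ - 1 / γ := by
        rw [← hγconj, hγdef]; ring
      have hinvγ : 1 / γ ≤ 1 := by rw [div_le_one hγ0]; linarith
      have hy0 : 0 ≤ y := by
        have : (0:ℝ) ≤ (y:ℝ) * s := by rw [hys]; linarith
        have hyr : (0:ℝ) ≤ (y:ℝ) := by nlinarith
        exact_mod_cast hyr
      have hγβ : γ < β := by
        calc γ = β / α := by field_simp [hβαγ]; linear_combination -hβαγ
        _ < β := div_lt_self hβ0 hα1
      have hinvlt : 1 / β < 1 / γ := one_div_lt_one_div_of_lt hγ0 hγβ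
      have hyv : y < v := by
        have h1 : (y:ℝ) * s < (v:ℝ) * s := by rw [hys, hvs]; linarith
        have h2 : (y:ℝ) < (v:ℝ) := by nlinarith
        exact_mod_cast h2
      obtain ⟨k, hk⟩ := ih y.toNat (by omega) x y rfl hxy hγ1
      have hk' : γ = α ^ k := hk
      exact ⟨k + 1, by rw [hβαγ, hk']; ring⟩

theorem pell_solutions_are_powers_of_fundamental
    (d U V : ℤ) (hd : 0 < d) (hdsq : ¬ ∃ m : ℤ, m * m = d)
    (hU : 0 < U) (hV : 0 < V) (hUV : U ^ 2 - d * V ^ 2 = 4)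
    (hmin : ∀ x y : ℤ, 0 < x → 0 < y → x ^ 2 - d * y ^ 2 = 4 → U ≤ x) :
    ∀ u v : ℤ, u ^ 2 - d * v ^ 2 = 4 →
      ∃ (k : ℤ) (ε : ℝ), (ε = 1 ∨ ε = -1) ∧
        ((u : ℝ) + (v : ℝ) * Real.sqrt (d : ℝ)) / 2 =
          ε * ((((U : ℝ) + (V : ℝ) * Real.sqrt (d : ℝ)) / 2) ^ k) := by
  intro u v hu
  set s : ℝ := Real.sqrt (d : ℝ) with hs
  have hd0 : (0:ℝ) ≤ (d:ℝ) := by positivity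
  have hs2 : s * s = (d : ℝ) := Real.mul_self_sqrt hd0
  set α : ℝ := ((U : ℝ) + (V : ℝ) * s) / 2 with hαdef
  have hα0 : (0:ℝ) < α := by
    rw [hαdef]
    have h1 : (0:ℝ) < (U:ℝ) := by exact_mod_cast hU
    have h2 : (0:ℝ) < (V:ℝ) := by exact_mod_cast hV
    have hs0 : (0:ℝ) ≤ s := Real.sqrt_nonneg _
    positivity
  -- a positive-case helper inline
  have pos_case : ∀ a b : ℤ, a ^ 2 - d * b ^ 2 = 4 →
      (0:ℝ) < ((a:ℝ) + (b:ℝ) * s) / 2 →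
      ∃ k : ℤ, ((a:ℝ) + (b:ℝ) * s) / 2 = α ^ k := by
    intro a b hab hpos
    set β : ℝ := ((a:ℝ) + (b:ℝ) * s) / 2 with hβdef
    have hab' : (a:ℝ) ^ 2 - (d:ℝ) * (b:ℝ) ^ 2 = 4 := by exact_mod_cast hab
    have hββ : β * (((a:ℝ) - (b:ℝ) * s) / 2) = 1 := by
      rw [hβdef]; linear_combination hab' / 4 - ((b:ℝ)^2/4) * hs2
    rcases le_or_gt 1 β with h1 | h1
    · obtain ⟨k, hk⟩ := pell4_descent d U V hd hU hV hUV hmin b.toNat a b rfl hab h1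
      have hk' : β = α ^ k := hk
      exact ⟨(k : ℤ), by rw [zpow_natCast]; exact hk'⟩
    · -- 0 < β < 1 : use conjugate (a, -b)
      have hβconj : ((a:ℝ) - (b:ℝ) * s) / 2 = 1 / β :=
        eq_one_div_of_mul_eq_one_left (by linarith [hββ])
      have hab2 : a ^ 2 - d * (-b) ^ 2 = 4 := by linear_combination hab
      have hge : 1 ≤ ((a:ℝ) + ((-b : ℤ):ℝ) * s) / 2 := by
        push_cast
        have : ((a:ℝ) - (b:ℝ) * s) / 2 = 1/β := hβconj
        have h2 : 1 < 1 / β := by rw [lt_div_iff₀ hpos]; linarith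
        linarith [this, h2]
      obtain ⟨k, hk⟩ := pell4_descent d U V hd hU hV hUV hmin (-b).toNat a (-b) rfl hab2 hge
      refine ⟨-(k : ℤ), ?_⟩
      have hk' : ((a:ℝ) + ((-b : ℤ):ℝ) * s) / 2 = α ^ k := hk
      push_cast at hk'
      have hαk : 1 / β = α ^ k := by
        rw [← hβconj]; linarith [hk']
      have hβne' : β ≠ 0 := ne_of_gt hpos
      rw [zpow_neg, zpow_natCast, ← hαk]
      field_simp
  -- main splitting on sign
  set β : ℝ := ((u:ℝ) + (v:ℝ) * s) / 2 with hβdef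
  have hu' : (u:ℝ) ^ 2 - (d:ℝ) * (v:ℝ) ^ 2 = 4 := by exact_mod_cast hu
  have hββ : β * (((u:ℝ) - (v:ℝ) * s) / 2) = 1 := by
    rw [hβdef]; linear_combination hu' / 4 - ((v:ℝ)^2/4) * hs2
  have hβne : β ≠ 0 := by
    intro h; rw [h, zero_mul] at hββ; exact zero_ne_one hββ
  rcases lt_or_gt_of_ne hβne with hneg | hpos
  · -- β < 0, use (-u, -v)
    have hu2 : (-u) ^ 2 - d * (-v) ^ 2 = 4 := by linear_combination hu
    have hpos2 : (0:ℝ) < (((-u : ℤ):ℝ) + ((-v : ℤ):ℝ) * s) / 2 := by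
      push_cast; rw [hβdef] at hneg; linarith
    obtain ⟨k, hk⟩ := pos_case (-u) (-v) hu2 hpos2
    refine ⟨k, -1, Or.inr rfl, ?_⟩
    push_cast at hk
    linarith [hk]
  · obtain ⟨k, hk⟩ := pos_case u v hu hpos
    exact ⟨k, 1, Or.inl rfl, by rw [one_mul]; exact hk⟩
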